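/- ext(m, 2·[1_3 1_2 0_1]) = ext(m, 1_4): every extremal simple m-rowed matrix avoiding the 3×4 configuration with columns (1,1,1),(1,1,1),(1,1,0),(1,1,0) equals [K_m^3 K_m^2 K_m^1 K_m^0], the matrix of all columns with at most three 1's, and its number of columns is C(m,3)+C(m,2)+C(m,1)+C(m,0). -/

import Mathlib

/-- A (0,1)-matrix (entries as `Bool`) is simple if it has no repeated columns. -/
def Simple {α β : Type*} (A : α → β → Bool) : Prop :=
  Function.Injective fun j i => A i j

/-- `F` is a configuration in `A`: some submatrix of `A` is a row and column
permutation of `F`. -/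
def IsConfig {α β γ δ : Type*} (F : α → β → Bool) (A : γ → δ → Bool) : Prop :=
  ∃ (r : α ↪ γ) (c : β ↪ δ), ∀ i j, F i j = A (r i) (c j)

/-- `2·[1₃ 1₂0₁]`: the 3×4 configuration with columns (1,1,1),(1,1,1),(1,1,0),(1,1,0). -/
def twoCfg : Fin 3 → Fin 4 → Bool :=
  ![![true, true, true, true], ![true, true, true, true], ![true, true, false, false]]

open Finset


def N3 (m : ℕ) : ℕ := m.choose 3 + m.choose 2 + m.choose 1 + m.choose 0

def Good (F : Finset (Finset ℕ)) : Prop :=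
  ∀ a b c : ℕ, a ≠ b → a ≠ c → b ≠ c →
    ∀ S1 ∈ F, ∀ S2 ∈ F, ∀ S3 ∈ F, ∀ S4 ∈ F,
      S1 ≠ S2 → S3 ≠ S4 →
      a ∈ S1 → b ∈ S1 → c ∈ S1 → a ∈ S2 → b ∈ S2 → c ∈ S2 →
      a ∈ S3 → b ∈ S3 → c ∉ S3 → a ∈ S4 → b ∈ S4 → c ∉ S4 → False

lemma card_filter_card_le {α : Type*} [DecidableEq α] (s : Finset α) (k : ℕ) :
    (s.powerset.filter fun t => t.card ≤ k).card
      = ∑ i ∈ Finset.range (k+1), s.card.choose i := by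
  have h : (s.powerset.filter fun t => t.card ≤ k)
      = (Finset.range (k+1)).biUnion (fun i => s.powersetCard i) := by
    ext t
    simp only [mem_filter, mem_powerset, mem_biUnion, mem_range, mem_powersetCard,
      Nat.lt_succ_iff]
    constructor
    · rintro ⟨h1, h2⟩; exact ⟨t.card, h2, h1, rfl⟩
    · rintro ⟨i, hi, h1, rfl⟩; exact ⟨h1, hi⟩
  rw [h, Finset.card_biUnion]
  · exact Finset.sum_congr rfl fun i _ => Finset.card_powersetCard i s
  · intro i _ j _ hij
    show Disjoint (s.powersetCard i) (s.powersetCard j)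
    rw [Finset.disjoint_left]
    intro t ht ht'
    rw [mem_powersetCard] at ht ht'
    exact hij (ht.2 ▸ ht'.2.symm ▸ rfl)

def small (m : ℕ) : Finset (Finset ℕ) := (Finset.range m).powerset.filter fun S => S.card ≤ 3

lemma card_small (m : ℕ) : (small m).card = N3 m := by
  rw [small, card_filter_card_le, Finset.card_range]
  simp [Finset.sum_range_succ, N3]
  ring

lemma mem_small {m : ℕ} {S : Finset ℕ} : S ∈ small m ↔ S ⊆ Finset.range m ∧ S.card ≤ 3 := by
  simp [small]

lemma main_base {m : ℕ} (hm : m ≤ 3) (F : Finset (Finset ℕ))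
    (hF : ∀ S ∈ F, S ⊆ Finset.range m) :
    F.card ≤ N3 m ∧ (F.card = N3 m → F = small m) := by
  have hsub : F ⊆ small m := by
    intro S hS
    rw [mem_small]
    refine ⟨hF S hS, ?_⟩
    calc S.card ≤ (Finset.range m).card := Finset.card_le_card (hF S hS)
      _ = m := Finset.card_range m
      _ ≤ 3 := hm
  refine ⟨(card_small m) ▸ Finset.card_le_card hsub, fun h => ?_⟩
  exact Finset.eq_of_subset_of_card_le hsub (by rw [card_small, h])

lemma main_lemma : ∀ m (F : Finset (Finset ℕ)), (∀ S ∈ F, S ⊆ Finset.range m) → Good F →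
    F.card ≤ N3 m ∧ (F.card = N3 m → F = small m) := by
  intro m
  induction m with
  | zero => intro F hF _; exact main_base (by norm_num) F hF
  | succ m ih =>
    intro F hF hG
    by_cases hm3 : m + 1 ≤ 3
    · exact main_base hm3 F hF
    push_neg at hm3
    classical
    set F0 : Finset (Finset ℕ) := F.filter (fun S => m ∉ S) with hF0def
    set F1 : Finset (Finset ℕ) := (F.filter (fun S => m ∈ S)).image (fun S => S.erase m)
      with hF1def
    have memF0 : ∀ {S : Finset ℕ}, S ∈ F0 ↔ S ∈ F ∧ m ∉ S := by intro S; simp [hF0def]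
    have memF1 : ∀ {S : Finset ℕ}, S ∈ F1 ↔ m ∉ S ∧ insert m S ∈ F := by
      intro S
      simp only [hF1def, Finset.mem_image, Finset.mem_filter]
      constructor
      · rintro ⟨T, ⟨hTF, hmT⟩, rfl⟩
        exact ⟨Finset.notMem_erase m T, by rwa [Finset.insert_erase hmT]⟩
      · rintro ⟨hmS, hFm⟩
        exact ⟨insert m S, ⟨hFm, Finset.mem_insert_self m S⟩, by rw [Finset.erase_insert hmS]⟩
    have hF0sub : ∀ S ∈ F0, S ⊆ Finset.range m := by
      intro S hS x hx
      have h1 := Finset.mem_range.mp (hF S (memF0.mp hS).1 hx)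
      have h2 : x ≠ m := fun h => (memF0.mp hS).2 (h ▸ hx)
      exact Finset.mem_range.mpr (by omega)
    have hF1sub : ∀ S ∈ F1, S ⊆ Finset.range m := by
      intro S hS x hx
      obtain ⟨hmS, hiS⟩ := memF1.mp hS
      have h1 := Finset.mem_range.mp (hF _ hiS (Finset.mem_insert_of_mem hx))
      have h2 : x ≠ m := fun h => hmS (h ▸ hx)
      exact Finset.mem_range.mpr (by omega)
    set U := F0 ∪ F1 with hUdef
    set B := F0 ∩ F1 with hBdef
    have hUsub : ∀ S ∈ U, S ⊆ Finset.range m := by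
      intro S hS
      rcases Finset.mem_union.mp hS with h | h
      exacts [hF0sub S h, hF1sub S h]
    have hUm : ∀ S ∈ U, m ∉ S := fun S hS hm => by
      have := Finset.mem_range.mp (hUsub S hS hm); omega
    have hcard1 : (F.filter (fun S => m ∈ S)).card + F0.card = F.card :=
      Finset.card_filter_add_card_filter_not (fun S => m ∈ S)
    have hcard2 : F1.card = (F.filter (fun S => m ∈ S)).card := by
      rw [hF1def]
      apply Finset.card_image_of_injOn
      intro S hS T hT h
      rw [Finset.mem_coe, Finset.mem_filter] at hS hT
      have h' : S.erase m = T.erase m := h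
      rw [← Finset.insert_erase hS.2, h', Finset.insert_erase hT.2]
    have hcardF : F.card = U.card + B.card := by
      have h' := Finset.card_union_add_card_inter F0 F1
      rw [← hUdef, ← hBdef] at h'
      omega
    -- Good U via lifting
    set lift : Finset ℕ → Finset ℕ := fun S => if S ∈ F0 then S else insert m S with hliftdef
    have hlift_memF : ∀ S ∈ U, lift S ∈ F := by
      intro S hS
      by_cases h : S ∈ F0
      · simpa [hliftdef, h] using (memF0.mp h).1
      · have h1 : S ∈ F1 := (Finset.mem_union.mp hS).resolve_left h
        simpa [hliftdef, h] using (memF1.mp h1).2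
    have hlift_iff : ∀ S ∈ U, ∀ x : ℕ, x ≠ m → (x ∈ lift S ↔ x ∈ S) := by
      intro S hS x hx
      by_cases h : S ∈ F0 <;> simp [hliftdef, h, hx]
    have hlift_inj : ∀ S ∈ U, ∀ T ∈ U, lift S = lift T → S = T := by
      intro S hS T hT h
      have hmS := hUm S hS
      have hmT := hUm T hT
      by_cases h1 : S ∈ F0 <;> by_cases h2 : T ∈ F0 <;>
        simp only [hliftdef, h1, h2, if_true, if_false] at h
      · exact h
      · exact absurd (h ▸ Finset.mem_insert_self m T) hmS
      · exact absurd (h ▸ Finset.mem_insert_self m S) hmT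
      · rw [← Finset.erase_insert hmS, h, Finset.erase_insert hmT]
    have hGU : Good U := by
      intro a b c hab hac hbc S1 h1 S2 h2 S3 h3 S4 h4 h12 h34 ha1 hb1 hc1 ha2 hb2 hc2
        ha3 hb3 hc3 ha4 hb4 hc4
      have ham : a ≠ m := fun h => by
        have := Finset.mem_range.mp (hUsub S3 h3 (h ▸ ha3)); omega
      have hbm : b ≠ m := fun h => by
        have := Finset.mem_range.mp (hUsub S3 h3 (h ▸ hb3)); omega
      have hcm : c ≠ m := fun h => by
        have := Finset.mem_range.mp (hUsub S1 h1 (h ▸ hc1)); omega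
      exact hG a b c hab hac hbc (lift S1) (hlift_memF _ h1) (lift S2) (hlift_memF _ h2)
        (lift S3) (hlift_memF _ h3) (lift S4) (hlift_memF _ h4)
        (fun h => h12 (hlift_inj _ h1 _ h2 h)) (fun h => h34 (hlift_inj _ h3 _ h4 h))
        ((hlift_iff _ h1 a ham).mpr ha1) ((hlift_iff _ h1 b hbm).mpr hb1)
        ((hlift_iff _ h1 c hcm).mpr hc1) ((hlift_iff _ h2 a ham).mpr ha2)
        ((hlift_iff _ h2 b hbm).mpr hb2) ((hlift_iff _ h2 c hcm).mpr hc2)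
        ((hlift_iff _ h3 a ham).mpr ha3) ((hlift_iff _ h3 b hbm).mpr hb3)
        (fun h => hc3 ((hlift_iff _ h3 c hcm).mp h))
        ((hlift_iff _ h4 a ham).mpr ha4) ((hlift_iff _ h4 b hbm).mpr hb4)
        (fun h => hc4 ((hlift_iff _ h4 c hcm).mp h))
    obtain ⟨hU1, hU2⟩ := ih U hUsub hGU
    -- B facts
    have hBmemF : ∀ T ∈ B, T ∈ F ∧ m ∉ T ∧ insert m T ∈ F := by
      intro T hT
      obtain ⟨h0, h1⟩ := Finset.mem_inter.mp hT
      exact ⟨(memF0.mp h0).1, (memF1.mp h1).1, (memF1.mp h1).2⟩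
    have hBsub : ∀ S ∈ B, S ⊆ Finset.range m := by
      intro S hS
      exact hF0sub S (Finset.mem_inter.mp hS).1
    have hlin : ∀ T1 ∈ B, ∀ T2 ∈ B, ∀ a b : ℕ, a ≠ b →
        a ∈ T1 → b ∈ T1 → a ∈ T2 → b ∈ T2 → T1 = T2 := by
      intro T1 hT1 T2 hT2 a b hab ha1 hb1 ha2 hb2
      by_contra hne
      obtain ⟨hT1F, hmT1, hiT1⟩ := hBmemF T1 hT1
      obtain ⟨hT2F, hmT2, hiT2⟩ := hBmemF T2 hT2
      have ham : a ≠ m := fun h => hmT1 (h ▸ ha1)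
      have hbm : b ≠ m := fun h => hmT1 (h ▸ hb1)
      exact hG a b m hab ham hbm (insert m T1) hiT1 (insert m T2) hiT2 T1 hT1F T2 hT2F
        (fun h => hne (by rw [← Finset.erase_insert hmT1, h, Finset.erase_insert hmT2])) hne
        (Finset.mem_insert_of_mem ha1) (Finset.mem_insert_of_mem hb1)
        (Finset.mem_insert_self m T1)
        (Finset.mem_insert_of_mem ha2) (Finset.mem_insert_of_mem hb2)
        (Finset.mem_insert_self m T2)
        ha1 hb1 hmT1 ha2 hb2 hmT2
    -- split B by size
    set Bs := B.filter (fun S => S.card ≤ 1) with hBsdef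
    set Bb := B.filter (fun S => ¬ S.card ≤ 1) with hBbdef
    have hBcard : Bs.card + Bb.card = B.card :=
      Finset.card_filter_add_card_filter_not (fun S : Finset ℕ => S.card ≤ 1)
    have hBbB : Bb ⊆ B := Finset.filter_subset _ _
    have hBsB : Bs ⊆ B := Finset.filter_subset _ _
    have h2 : ∀ S ∈ Bb, 2 ≤ S.card := by
      intro S hS
      have := (Finset.mem_filter.mp hS).2
      omega
    have hBssub : Bs ⊆ (Finset.range m).powerset.filter (fun S => S.card ≤ 1) := by
      intro S hS
      rw [Finset.mem_filter] at hS ⊢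
      exact ⟨Finset.mem_powerset.mpr (hBsub S hS.1), hS.2⟩
    have hcs1 : ((Finset.range m).powerset.filter (fun S => S.card ≤ 1)).card
        = m.choose 1 + m.choose 0 := by
      rw [card_filter_card_le, Finset.card_range]
      simp [Finset.sum_range_succ]
      omega
    have hBs_bound : Bs.card ≤ m.choose 1 + m.choose 0 := by
      rw [← hcs1]; exact Finset.card_le_card hBssub
    -- pair selector
    set P : Finset ℕ → Finset ℕ :=
      fun S : Finset ℕ => if h : 2 ≤ S.card then (Finset.exists_subset_card_eq h).choose else ∅ with hPdef
    have hPspec : ∀ S : Finset ℕ, 2 ≤ S.card → P S ⊆ S ∧ (P S).card = 2 := by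
      intro S h
      have : P S = (Finset.exists_subset_card_eq h).choose := by rw [hPdef]; simp [h]
      rw [this]
      obtain ⟨h1, h2⟩ := (Finset.exists_subset_card_eq h).choose_spec
      exact ⟨h1, h2⟩
    have hmaps : ∀ S ∈ Bb, P S ∈ (Finset.range m).powersetCard 2 := by
      intro S hS
      obtain ⟨hsub, hcard⟩ := hPspec S (h2 S hS)
      exact Finset.mem_powersetCard.mpr ⟨hsub.trans (hBsub S (hBbB hS)), hcard⟩
    have hinjP : ∀ S ∈ Bb, ∀ T ∈ Bb, P S = P T → S = T := by
      intro S hS T hT h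
      obtain ⟨hsubS, hcardS⟩ := hPspec S (h2 S hS)
      obtain ⟨hsubT, hcardT⟩ := hPspec T (h2 T hT)
      obtain ⟨a, b, hab, hPS⟩ := Finset.card_eq_two.mp hcardS
      have haS : a ∈ S := hsubS (by rw [hPS]; simp)
      have hbS : b ∈ S := hsubS (by rw [hPS]; simp)
      have haT : a ∈ T := hsubT (by rw [← h, hPS]; simp)
      have hbT : b ∈ T := hsubT (by rw [← h, hPS]; simp)
      exact hlin S (hBbB hS) T (hBbB hT) a b hab haS hbS haT hbT
    have himsub : Bb.image P ⊆ (Finset.range m).powersetCard 2 := by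
      intro x hx
      obtain ⟨S, hS, rfl⟩ := Finset.mem_image.mp hx
      exact hmaps S hS
    have himcard : (Bb.image P).card = Bb.card :=
      Finset.card_image_of_injOn (fun S hS T hT h => hinjP S hS T hT h)
    have hBb_bound : Bb.card ≤ m.choose 2 := by
      have h1 : (Bb.image P).card ≤ ((Finset.range m).powersetCard 2).card :=
        Finset.card_le_card himsub
      rw [himcard, Finset.card_powersetCard, Finset.card_range] at h1
      exact h1
    -- arithmetic
    have e3 : (m+1).choose 3 = m.choose 2 + m.choose 3 := by
      rw [show (3:ℕ) = 2+1 from rfl, Nat.choose_succ_succ]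
    have e2 : (m+1).choose 2 = m.choose 1 + m.choose 2 := by
      rw [show (2:ℕ) = 1+1 from rfl, Nat.choose_succ_succ]
    have e1 : (m+1).choose 1 = m.choose 0 + m.choose 1 := by
      rw [show (1:ℕ) = 0+1 from rfl, Nat.choose_succ_succ]
    have e0 : (m+1).choose 0 = m.choose 0 := by simp
    have hN : N3 (m+1) = N3 m + (m.choose 2 + (m.choose 1 + m.choose 0)) := by
      unfold N3
      rw [e3, e2, e1, e0]
      ring
    constructor
    · rw [hcardF, hN]
      have : B.card ≤ m.choose 2 + (m.choose 1 + m.choose 0) := by omega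
      omega
    intro hEq
    rw [hcardF] at hEq
    have hUcard : U.card = N3 m := by omega
    have hBscard : Bs.card = m.choose 1 + m.choose 0 := by omega
    have hBbcard : Bb.card = m.choose 2 := by omega
    have hUeq : U = small m := hU2 hUcard
    have hBs_eq : Bs = (Finset.range m).powerset.filter (fun S => S.card ≤ 1) :=
      Finset.eq_of_subset_of_card_le hBssub (by rw [hcs1, hBscard])
    have himeq : Bb.image P = (Finset.range m).powersetCard 2 :=
      Finset.eq_of_subset_of_card_le himsub
        (by rw [himcard, Finset.card_powersetCard, Finset.card_range, hBbcard])
    have hBb_all2 : ∀ S ∈ Bb, S.card = 2 := by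
      intro S hS
      by_contra hne
      have h2S := h2 S hS
      obtain ⟨hPsub, hPcard⟩ := hPspec S h2S
      have hnot : ¬ S ⊆ P S := fun h => by
        have := Finset.card_le_card h
        omega
      obtain ⟨e, heS, hePS⟩ := Finset.not_subset.mp hnot
      obtain ⟨a, b, hab, hPS⟩ := Finset.card_eq_two.mp hPcard
      have haPS : a ∈ P S := by rw [hPS]; simp
      have haS : a ∈ S := hPsub haPS
      have hae : a ≠ e := fun h => hePS (h ▸ haPS)
      have hQ : ({a, e} : Finset ℕ) ∈ (Finset.range m).powersetCard 2 := by
        rw [Finset.mem_powersetCard]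
        constructor
        · intro x hx
          rcases Finset.mem_insert.mp hx with rfl | hx
          · exact hBsub S (hBbB hS) haS
          · rw [Finset.mem_singleton] at hx
            exact hx ▸ hBsub S (hBbB hS) heS
        · rw [Finset.card_insert_of_notMem (by simp [hae]), Finset.card_singleton]
      rw [← himeq] at hQ
      obtain ⟨T, hT, hPT⟩ := Finset.mem_image.mp hQ
      have hsubT := (hPspec T (h2 T hT)).1
      have haT : a ∈ T := hsubT (by rw [hPT]; simp)
      have heT : e ∈ T := hsubT (by rw [hPT]; simp)
      have hST : S = T := hlin S (hBbB hS) T (hBbB hT) a e hae haS heS haT heT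
      rw [← hST] at hPT
      exact hePS (by rw [hPT]; simp)
    have hBb_eq : Bb = (Finset.range m).powersetCard 2 := by
      apply Finset.eq_of_subset_of_card_le
      · intro S hS
        exact Finset.mem_powersetCard.mpr ⟨hBsub S (hBbB hS), hBb_all2 S hS⟩
      · rw [Finset.card_powersetCard, Finset.card_range, hBbcard]
    have hBmem2 : ∀ S : Finset ℕ, S ⊆ Finset.range m → S.card ≤ 2 → S ∈ B := by
      intro S hsub hcard
      by_cases h : S.card ≤ 1
      · have hSBs : S ∈ Bs := by
          rw [hBs_eq, Finset.mem_filter]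
          exact ⟨Finset.mem_powerset.mpr hsub, h⟩
        exact hBsB hSBs
      · have hSBb : S ∈ Bb := by
          rw [hBb_eq, Finset.mem_powersetCard]
          exact ⟨hsub, by omega⟩
        exact hBbB hSBb
    have h3F1 : ∀ T : Finset ℕ, T ⊆ Finset.range m → T.card = 3 → T ∉ F1 := by
      intro T hTsub hT3 hTF1
      obtain ⟨a, b, t, hab, hat, hbt, rfl⟩ := Finset.card_eq_three.mp hT3
      have haR : a ∈ Finset.range m := hTsub (by simp)
      have hbR : b ∈ Finset.range m := hTsub (by simp)
      have htR : t ∈ Finset.range m := hTsub (by simp)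
      have ham : a ≠ m := fun h => by have := Finset.mem_range.mp haR; omega
      have hbm : b ≠ m := fun h => by have := Finset.mem_range.mp hbR; omega
      have htm : t ≠ m := fun h => by have := Finset.mem_range.mp htR; omega
      have hS3 : insert m {a} ∈ F := by
        have hB : ({a} : Finset ℕ) ∈ B := hBmem2 {a} (by simpa using haR) (by simp)
        exact (memF1.mp (Finset.mem_inter.mp hB).2).2
      have hS1 : insert m {a, b} ∈ F := by
        have hB : ({a, b} : Finset ℕ) ∈ B := hBmem2 {a, b}
          (by intro x hx; rcases Finset.mem_insert.mp hx with rfl | hx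
              · exact haR
              · rw [Finset.mem_singleton] at hx; exact hx ▸ hbR)
          (Finset.card_insert_le a {b})
        exact (memF1.mp (Finset.mem_inter.mp hB).2).2
      have hS4 : insert m {a, t} ∈ F := by
        have hB : ({a, t} : Finset ℕ) ∈ B := hBmem2 {a, t}
          (by intro x hx; rcases Finset.mem_insert.mp hx with rfl | hx
              · exact haR
              · rw [Finset.mem_singleton] at hx; exact hx ▸ htR)
          (Finset.card_insert_le a {t})
        exact (memF1.mp (Finset.mem_inter.mp hB).2).2
      have hS2 : insert m {a, b, t} ∈ F := (memF1.mp hTF1).2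
      refine hG a m b ham hab (fun h => hbm h.symm)
        (insert m {a, b}) hS1 (insert m {a, b, t}) hS2
        (insert m {a}) hS3 (insert m {a, t}) hS4
        ?_ ?_ (by simp) (by simp) (by simp) (by simp) (by simp) (by simp)
        (by simp) (by simp) ?_ (by simp) (by simp) ?_
      · intro h
        have : t ∈ insert m ({a, b} : Finset ℕ) := h ▸ (by simp : t ∈ insert m ({a,b,t}:Finset ℕ))
        simp only [Finset.mem_insert, Finset.mem_singleton] at this
        rcases this with h' | h' | h'
        exacts [htm h', hat h'.symm, hbt h'.symm]
      · intro h
        have : t ∈ insert m ({a} : Finset ℕ) := h ▸ (by simp : t ∈ insert m ({a,t}:Finset ℕ))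
        simp only [Finset.mem_insert, Finset.mem_singleton] at this
        rcases this with h' | h'
        exacts [htm h', hat h'.symm]
      · simp only [Finset.mem_insert, Finset.mem_singleton]
        push_neg
        exact ⟨fun h => hbm h, fun h => hab h.symm⟩
      · simp only [Finset.mem_insert, Finset.mem_singleton]
        push_neg
        exact ⟨fun h => hbm h, fun h => hab h.symm, fun h => hbt h⟩
    have hF0eq : F0 = small m := by
      apply Finset.Subset.antisymm
      · intro S hS
        exact hUeq ▸ Finset.mem_union_left _ hS
      · intro S hS
        rw [mem_small] at hS
        by_cases h3 : S.card = 3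
        · have hSU : S ∈ U := by rw [hUeq]; exact mem_small.mpr ⟨hS.1, hS.2⟩
          rcases Finset.mem_union.mp hSU with h | h
          · exact h
          · exact absurd h (h3F1 S hS.1 h3)
        · have hSB : S ∈ B := hBmem2 S hS.1 (by omega)
          exact (Finset.mem_inter.mp hSB).1
    have hF1mem : ∀ S : Finset ℕ, S ∈ F1 ↔ (S ⊆ Finset.range m ∧ S.card ≤ 2) := by
      intro S
      constructor
      · intro hS
        have hSU : S ∈ U := Finset.mem_union_right _ hS
        rw [hUeq, mem_small] at hSU
        refine ⟨hSU.1, ?_⟩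
        by_contra hc
        have h3 : S.card = 3 := by omega
        exact h3F1 S hSU.1 h3 hS
      · rintro ⟨h1', h2'⟩
        exact (Finset.mem_inter.mp (hBmem2 S h1' h2')).2
    ext S
    rw [mem_small]
    constructor
    · intro hSF
      by_cases hm : m ∈ S
      · have hT : S.erase m ∈ F1 := memF1.mpr
          ⟨Finset.notMem_erase m S, by rwa [Finset.insert_erase hm]⟩
        have hprops := (hF1mem _).mp hT
        have hc := Finset.card_erase_of_mem hm
        have hpos : 0 < S.card := Finset.card_pos.mpr ⟨m, hm⟩
        exact ⟨hF S hSF, by omega⟩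
      · have hS0 : S ∈ F0 := memF0.mpr ⟨hSF, hm⟩
        rw [hF0eq, mem_small] at hS0
        refine ⟨hS0.1.trans ?_, hS0.2⟩
        intro x hx
        rw [Finset.mem_range] at hx ⊢
        omega
    · rintro ⟨hsub, hcard⟩
      by_cases hm : m ∈ S
      · have hT : S.erase m ∈ F1 := by
          rw [hF1mem]
          constructor
          · intro x hx
            have hxS := Finset.mem_of_mem_erase hx
            have hxm := Finset.ne_of_mem_erase hx
            have := Finset.mem_range.mp (hsub hxS)
            exact Finset.mem_range.mpr (by omega)
          · have := Finset.card_erase_of_mem hm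
            omega
        have := (memF1.mp hT).2
        rwa [Finset.insert_erase hm] at this
      · have hS0 : S ∈ F0 := by
          rw [hF0eq, mem_small]
          refine ⟨?_, hcard⟩
          intro x hx
          have := Finset.mem_range.mp (hsub hx)
          have hxm : x ≠ m := fun h => hm (h ▸ hx)
          exact Finset.mem_range.mpr (by omega)
        exact (memF0.mp hS0).1

lemma card_subtype (m : ℕ) : Fintype.card {S : Finset (Fin m) // S.card ≤ 3} = N3 m := by
  rw [Fintype.card_subtype]
  have h : (Finset.univ.filter fun S : Finset (Fin m) => S.card ≤ 3) =
      ((Finset.univ : Finset (Fin m)).powerset.filter fun S => S.card ≤ 3) := by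
    rw [Finset.powerset_univ]
  rw [h, card_filter_card_le, Finset.card_univ, Fintype.card_fin]
  simp [Finset.sum_range_succ, N3]
  ring

def colF {m n : ℕ} (A : Fin m → Fin n → Bool) (j : Fin n) : Finset (Fin m) :=
  Finset.univ.filter fun i => A i j

def colN {m n : ℕ} (A : Fin m → Fin n → Bool) (j : Fin n) : Finset ℕ :=
  (colF A j).image Fin.val

lemma mem_colF {m n : ℕ} {A : Fin m → Fin n → Bool} {i : Fin m} {j : Fin n} :
    i ∈ colF A j ↔ A i j = true := by simp [colF]

lemma mem_colN {m n : ℕ} {A : Fin m → Fin n → Bool} {x : ℕ} {j : Fin n} :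
    x ∈ colN A j ↔ ∃ hx : x < m, A ⟨x, hx⟩ j = true := by
  simp only [colN, Finset.mem_image, mem_colF]
  constructor
  · rintro ⟨i, hi, rfl⟩
    exact ⟨i.2, by simpa using hi⟩
  · rintro ⟨hx, h⟩
    exact ⟨⟨x, hx⟩, h, rfl⟩

lemma mem_colN' {m n : ℕ} {A : Fin m → Fin n → Bool} {x : ℕ} {j : Fin n} (hx : x < m) :
    x ∈ colN A j ↔ A ⟨x, hx⟩ j = true := by
  rw [mem_colN]
  exact ⟨fun ⟨h, p⟩ => p, fun p => ⟨hx, p⟩⟩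

lemma not_mem_colN' {m n : ℕ} {A : Fin m → Fin n → Bool} {x : ℕ} {j : Fin n} (hx : x < m)
    (h : x ∉ colN A j) : A ⟨x, hx⟩ j = false := by
  cases hh : A ⟨x, hx⟩ j
  · rfl
  · exact absurd ((mem_colN' hx).mpr hh) h

lemma colF_inj {m n : ℕ} {A : Fin m → Fin n → Bool} (hA : Simple A) {j1 j2 : Fin n}
    (h : colF A j1 = colF A j2) : j1 = j2 := by
  apply hA
  funext i
  have h' := Finset.ext_iff.mp h i
  simp only [mem_colF] at h'
  show A i j1 = A i j2
  cases h1 : A i j1 <;> cases h2 : A i j2 <;> simp_all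

lemma colN_inj {m n : ℕ} {A : Fin m → Fin n → Bool} (hA : Simple A) {j1 j2 : Fin n}
    (h : colN A j1 = colN A j2) : j1 = j2 :=
  colF_inj hA (Finset.image_injective Fin.val_injective h)

lemma good_of_avoid {m n : ℕ} (A : Fin m → Fin n → Bool) (hcfg : ¬ IsConfig twoCfg A) :
    Good (Finset.univ.image (colN A)) := by
  intro a b c hab hac hbc S1 h1 S2 h2 S3 h3 S4 h4 h12 h34 ha1 hb1 hc1 ha2 hb2 hc2
    ha3 hb3 hc3 ha4 hb4 hc4
  obtain ⟨j1, -, rfl⟩ := Finset.mem_image.mp h1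
  obtain ⟨j2, -, rfl⟩ := Finset.mem_image.mp h2
  obtain ⟨j3, -, rfl⟩ := Finset.mem_image.mp h3
  obtain ⟨j4, -, rfl⟩ := Finset.mem_image.mp h4
  obtain ⟨ham, -⟩ := mem_colN.mp ha1
  obtain ⟨hbm, -⟩ := mem_colN.mp hb1
  obtain ⟨hcm, -⟩ := mem_colN.mp hc1
  have hA1a := (mem_colN' (A := A) ham).mp ha1
  have hA2a := (mem_colN' (A := A) ham).mp ha2
  have hA3a := (mem_colN' (A := A) ham).mp ha3
  have hA4a := (mem_colN' (A := A) ham).mp ha4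
  have hA1b := (mem_colN' (A := A) hbm).mp hb1
  have hA2b := (mem_colN' (A := A) hbm).mp hb2
  have hA3b := (mem_colN' (A := A) hbm).mp hb3
  have hA4b := (mem_colN' (A := A) hbm).mp hb4
  have hA1c := (mem_colN' (A := A) hcm).mp hc1
  have hA2c := (mem_colN' (A := A) hcm).mp hc2
  have hA3c := not_mem_colN' hcm hc3
  have hA4c := not_mem_colN' hcm hc4
  have hj12 : j1 ≠ j2 := fun h => h12 (by rw [h])
  have hj34 : j3 ≠ j4 := fun h => h34 (by rw [h])
  have hj13 : j1 ≠ j3 := fun h => hc3 (h ▸ hc1)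
  have hj14 : j1 ≠ j4 := fun h => hc4 (h ▸ hc1)
  have hj23 : j2 ≠ j3 := fun h => hc3 (h ▸ hc2)
  have hj24 : j2 ≠ j4 := fun h => hc4 (h ▸ hc2)
  apply hcfg
  refine ⟨⟨![⟨a, ham⟩, ⟨b, hbm⟩, ⟨c, hcm⟩], ?_⟩, ⟨![j1, j2, j3, j4], ?_⟩, ?_⟩
  · intro x y hxy
    fin_cases x <;> fin_cases y <;> simp_all [Fin.ext_iff]
  · intro x y hxy
    fin_cases x <;> fin_cases y <;> simp_all [Fin.ext_iff]
  · intro i j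
    show twoCfg i j = A (![⟨a, ham⟩, ⟨b, hbm⟩, ⟨c, hcm⟩] i) (![j1, j2, j3, j4] j)
    fin_cases i <;> fin_cases j <;>
      simp [twoCfg, Matrix.vecHead, Matrix.vecTail, Function.comp, hA1a, hA2a, hA3a, hA4a, hA1b, hA2b, hA3b, hA4b, hA1c, hA2c, hA3c, hA4c]

/-- ext theorem -/
theorem stmt16 (m : ℕ) :
    IsGreatest {n : ℕ | ∃ A : Fin m → Fin n → Bool, Simple A ∧ ¬ IsConfig twoCfg A}
      (m.choose 3 + m.choose 2 + m.choose 1 + m.choose 0) ∧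
    ∀ (n : ℕ) (A : Fin m → Fin n → Bool), Simple A → ¬ IsConfig twoCfg A →
      n = m.choose 3 + m.choose 2 + m.choose 1 + m.choose 0 →
      ∃ f : Fin n ≃ {S : Finset (Fin m) // S.card ≤ 3},
        ∀ i j, A i j = decide (i ∈ (f j).1) := by
  have hcard' : Fintype.card {S : Finset (Fin m) // S.card ≤ 3}
      = m.choose 3 + m.choose 2 + m.choose 1 + m.choose 0 := card_subtype m
  constructor
  · constructor
    · -- membership
      set e := (Fintype.equivFinOfCardEq hcard').symm with hedef
      refine ⟨fun i j => decide (i ∈ (e j).1), ?_, ?_⟩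
      · intro j1 j2 h
        apply e.injective
        apply Subtype.ext
        ext i
        have h' := congrFun h i
        simpa using h'
      · rintro ⟨r, c, hrc⟩
        have hmem : ∀ (ii : Fin 3) (jj : Fin 4), twoCfg ii jj = true → r ii ∈ (e (c jj)).1 := by
          intro ii jj h
          have h2 := hrc ii jj
          rw [h] at h2
          exact of_decide_eq_true h2.symm
        have hr01 : r 0 ≠ r 1 := fun h => absurd (r.injective h) (by decide)
        have hr02 : r 0 ≠ r 2 := fun h => absurd (r.injective h) (by decide)
        have hr12 : r 1 ≠ r 2 := fun h => absurd (r.injective h) (by decide)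
        have hcardR : ({r 0, r 1, r 2} : Finset (Fin m)).card = 3 := by
          rw [Finset.card_insert_of_notMem (by simp [hr01, hr02]),
            Finset.card_insert_of_notMem (by simp [hr12]), Finset.card_singleton]
        have hsub : ∀ jj : Fin 4, twoCfg 2 jj = true →
            ({r 0, r 1, r 2} : Finset (Fin m)) ⊆ (e (c jj)).1 := by
          intro jj hjj x hx
          rcases Finset.mem_insert.mp hx with rfl | hx
          · exact hmem 0 jj (by revert hjj; fin_cases jj <;> decide)
          rcases Finset.mem_insert.mp hx with rfl | hx
          · exact hmem 1 jj (by revert hjj; fin_cases jj <;> decide)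
          · rw [Finset.mem_singleton] at hx
            exact hx ▸ hmem 2 jj hjj
        have hT0 : ({r 0, r 1, r 2} : Finset (Fin m)) = (e (c 0)).1 :=
          Finset.eq_of_subset_of_card_le (hsub 0 rfl) (by rw [hcardR]; exact (e (c 0)).2)
        have hT1 : ({r 0, r 1, r 2} : Finset (Fin m)) = (e (c 1)).1 :=
          Finset.eq_of_subset_of_card_le (hsub 1 rfl) (by rw [hcardR]; exact (e (c 1)).2)
        have : c 0 = c 1 := e.injective (Subtype.ext (hT0 ▸ hT1))
        exact absurd (c.injective this) (by decide)
    · -- upper bound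
      rintro n ⟨A, hA, hcfg⟩
      have hsub : ∀ S ∈ Finset.univ.image (colN A), S ⊆ Finset.range m := by
        intro S hS
        obtain ⟨j, -, rfl⟩ := Finset.mem_image.mp hS
        intro x hx
        obtain ⟨h, -⟩ := mem_colN.mp hx
        exact Finset.mem_range.mpr h
      have hGood := good_of_avoid A hcfg
      have hcardim : (Finset.univ.image (colN A)).card = n := by
        rw [Finset.card_image_of_injective _ (fun j1 j2 h => colN_inj hA h),
          Finset.card_univ, Fintype.card_fin]
      exact hcardim ▸ (main_lemma m _ hsub hGood).1
  · -- extremal characterization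
    intro n A hA hcfg hn
    have hsub : ∀ S ∈ Finset.univ.image (colN A), S ⊆ Finset.range m := by
      intro S hS
      obtain ⟨j, -, rfl⟩ := Finset.mem_image.mp hS
      intro x hx
      obtain ⟨h, -⟩ := mem_colN.mp hx
      exact Finset.mem_range.mpr h
    have hGood := good_of_avoid A hcfg
    have hcardim : (Finset.univ.image (colN A)).card = n := by
      rw [Finset.card_image_of_injective _ (fun j1 j2 h => colN_inj hA h),
        Finset.card_univ, Fintype.card_fin]
    have hFeq : Finset.univ.image (colN A) = small m :=
      (main_lemma m _ hsub hGood).2 (by rw [hcardim, hn]; rfl)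
    have hcols : ∀ j, (colF A j).card ≤ 3 := by
      intro j
      have hmem : colN A j ∈ Finset.univ.image (colN A) :=
        Finset.mem_image_of_mem _ (Finset.mem_univ j)
      rw [hFeq, mem_small] at hmem
      have hc : (colN A j).card = (colF A j).card :=
        Finset.card_image_of_injective _ Fin.val_injective
      omega
    have hgbij : Function.Bijective
        (fun j => (⟨colF A j, hcols j⟩ : {S : Finset (Fin m) // S.card ≤ 3})) := by
      rw [Fintype.bijective_iff_injective_and_card]
      constructor
      · intro j1 j2 h
        exact colF_inj hA (congrArg Subtype.val h)
      · rw [Fintype.card_fin, hcard']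
        exact hn
    refine ⟨Equiv.ofBijective _ hgbij, ?_⟩
    intro i j
    show A i j = decide (i ∈ colF A j)
    cases h : A i j <;> simp [colF, h]
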